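/- arXiv:1306.3200 — 2 statements merged into one kernel-verified Lean document; each statement's English description precedes it below -/
import Mathlib

section
/- With U, U', w_j^± as above, U' equals the product of the N reflection operators R_{w_j^−} = I − 2|w_j^−⟩⟨w_j^−| (in any order), i.e. U' = ∏_{j=1}^{N} (I − 2 P_j^−) where P_j^− is the orthogonal projection onto span(w_j^−). -/
open Matrix Complex BigOperators Kronecker

/-- Rank-one outer product |ψ⟩⟨ψ| as a matrix. -/
noncomputable def outerProd {d : Type*} [Fintype d] (ψ : d → ℂ) : Matrix d d ℂ :=
  Matrix.vecMulVec ψ (star ψ)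

/-- Reflection operator R_ψ = I - 2|ψ⟩⟨ψ|. -/
noncomputable def reflOp {d : Type*} [Fintype d] [DecidableEq d] (ψ : d → ℂ) : Matrix d d ℂ :=
  1 - (2 : ℂ) • outerProd ψ

/-- A matrix is unitary. -/
def IsUnitaryM {d : Type*} [Fintype d] [DecidableEq d] (A : Matrix d d ℂ) : Prop :=
  Aᴴ * A = 1 ∧ A * Aᴴ = 1

/-- ψ is a unit vector. -/
def IsUnitVec {d : Type*} [Fintype d] (ψ : d → ℂ) : Prop :=
  ∑ i, ‖ψ i‖ ^ 2 = 1

/-- Euclidean norm of a vector. -/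
noncomputable def evnorm {d : Type*} [Fintype d] (v : d → ℂ) : ℝ :=
  Real.sqrt (∑ i, ‖v i‖ ^ 2)

/-- Frobenius (Hilbert–Schmidt) norm ‖A‖_Fr = √(Tr(A Aᴴ)). -/
noncomputable def frobNorm {d : Type*} [Fintype d] (A : Matrix d d ℂ) : ℝ :=
  Real.sqrt ((Matrix.trace (A * Aᴴ)).re)

/-- Hermitian inner product ⟨v, w⟩ = ∑ conj(vᵢ) wᵢ. -/
noncomputable def hinner {d : Type*} [Fintype d] (v w : d → ℂ) : ℂ :=
  ∑ i, (starRingEnd ℂ) (v i) * w i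

/-- U' = |0⟩⟨1| ⊗ U + |1⟩⟨0| ⊗ U† on ℂ² ⊗ ℂ^N. -/
noncomputable def Usim {N : ℕ} (U : Matrix (Fin N) (Fin N) ℂ) :
    Matrix (Fin 2 × Fin N) (Fin 2 × Fin N) ℂ :=
  (!![(0 : ℂ), 1; 0, 0]) ⊗ₖ U + (!![(0 : ℂ), 0; 1, 0]) ⊗ₖ Uᴴ

/-- w_j^s = (|1⟩⊗e_j + s·|0⟩⊗u_j)/√2 where u_j is the j-th column of U and s = ±1. -/
noncomputable def wvec {N : ℕ} (U : Matrix (Fin N) (Fin N) ℂ) (s : ℂ) (j : Fin N) :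
    Fin 2 × Fin N → ℂ :=
  fun p => ((if p.1 = 1 ∧ p.2 = j then 1 else 0) + s * (if p.1 = 0 then U p.2 j else 0)) /
    (Real.sqrt 2 : ℝ)

lemma vmv_mul {d : Type*} [Fintype d] (a b c e : d → ℂ) :
    vecMulVec a b * vecMulVec c e = (∑ m, b m * c m) • vecMulVec a e := by
  ext i k
  simp only [mul_apply, vecMulVec_apply, Matrix.smul_apply, smul_eq_mul, Finset.sum_mul]
  exact Finset.sum_congr rfl fun m _ => by ring

lemma wvec_hinner {N : ℕ} (U : Matrix (Fin N) (Fin N) ℂ) (hU : Uᴴ * U = 1) (j k : Fin N) :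
    ∑ p, star (wvec U (-1) j p) * wvec U (-1) k p = if j = k then 1 else 0 := by
  have h2 : ((Real.sqrt 2 : ℝ) : ℂ) * ((Real.sqrt 2 : ℝ) : ℂ) = 2 := by
    have := Real.mul_self_sqrt (by norm_num : (0:ℝ) ≤ 2)
    exact_mod_cast congrArg Complex.ofReal this
  have hue := congrArg (fun M => M j k) hU
  simp only [mul_apply, conjTranspose_apply, one_apply] at hue
  simp only [wvec, Fintype.sum_prod_type, Fin.sum_univ_two]
  simp only [star_div₀, star_add, star_mul', star_one, star_zero, RCLike.star_def]
  simp [Fin.ext_iff, div_mul_div_comm, h2, apply_ite (starRingEnd ℂ), ← Finset.sum_div,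
    Finset.mul_sum]
  simp only [RCLike.star_def] at hue
  rw [hue]
  simp only [← Fin.ext_iff, Finset.sum_ite_eq', Finset.mem_univ, if_true]
  by_cases h : j = k
  · simp [h]; norm_num
  · simp [h, Ne.symm h]

lemma outer_mul_outer {d : Type*} [Fintype d] (v w : d → ℂ) :
    outerProd v * outerProd w = (∑ m, star (v m) * w m) • vecMulVec v (star w) :=
  vmv_mul v (star v) w (star w)

lemma sum_mul_zero {d : Type*} [Fintype d] {N : ℕ} (P : Fin N → Matrix d d ℂ)
    (h0 : ∀ j k, j ≠ k → P j * P k = 0) (j : Fin N) (t : List (Fin N)) (hj : j ∉ t) :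
    P j * (t.map P).sum = 0 := by
  induction t with
  | nil => simp
  | cons a t ih =>
    simp only [List.mem_cons, not_or] at hj
    simp [mul_add, h0 j a hj.1, ih hj.2]

lemma prod_refl_list {d : Type*} [Fintype d] [DecidableEq d] {N : ℕ}
    (P : Fin N → Matrix d d ℂ)
    (h0 : ∀ j k, j ≠ k → P j * P k = 0) (l : List (Fin N)) (hl : l.Nodup) :
    (l.map fun j => (1 : Matrix d d ℂ) - (2:ℂ) • P j).prod
      = 1 - (2:ℂ) • (l.map P).sum := by
  induction l with
  | nil => simp
  | cons a t ih =>
    rw [List.map_cons, List.prod_cons, List.map_cons, List.sum_cons,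
      ih (List.Nodup.of_cons hl)]
    have ha : a ∉ t := (List.nodup_cons.mp hl).1
    have hPS : P a * (t.map P).sum = 0 := sum_mul_zero P h0 a t ha
    simp only [sub_mul, mul_sub, one_mul, mul_one, Matrix.smul_mul, Matrix.mul_smul,
      hPS, smul_zero, smul_add, smul_smul]
    abel

lemma usim_eq {N : ℕ} (U : Matrix (Fin N) (Fin N) ℂ) (hU : U * Uᴴ = 1) :
    Usim U = 1 - (2:ℂ) • ∑ j, outerProd (wvec U (-1) j) := by
  have h2 : ((Real.sqrt 2 : ℝ) : ℂ) * ((Real.sqrt 2 : ℝ) : ℂ) = 2 := by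
    have := Real.mul_self_sqrt (by norm_num : (0:ℝ) ≤ 2)
    exact_mod_cast congrArg Complex.ofReal this
  ext ⟨x, a⟩ ⟨y, b⟩
  have hue := congrArg (fun M => M a b) hU
  simp only [mul_apply, conjTranspose_apply, one_apply, RCLike.star_def] at hue
  simp only [Usim, wvec, outerProd, Matrix.add_apply, kroneckerMap_apply, Matrix.sub_apply,
    Matrix.smul_apply, Matrix.sum_apply, vecMulVec_apply, Matrix.one_apply, smul_eq_mul,
    Pi.star_apply, star_div₀, star_add, star_mul', star_one, star_zero, RCLike.star_def,
    conjTranspose_apply]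
  fin_cases x <;> fin_cases y <;>
    simp [Fin.ext_iff, Prod.ext_iff, div_mul_div_comm, h2, apply_ite (starRingEnd ℂ),
      Finset.mul_sum, ← Finset.sum_div, hue, mul_add, add_mul, Finset.sum_add_distrib,
      Finset.sum_ite_eq', Finset.sum_ite_eq, ← Fin.ext_iff] <;> ring_nf


/-- U' is the product of the N reflections about the w_j^-. -/
theorem Usim_eq_prod_refl {N : ℕ} (U : Matrix (Fin N) (Fin N) ℂ) (hU : IsUnitaryM U) :
    Usim U = (List.ofFn fun j : Fin N => reflOp (wvec U (-1) j)).prod := by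
  simp only [reflOp]
  set P : Fin N → Matrix (Fin 2 × Fin N) (Fin 2 × Fin N) ℂ :=
    fun j => outerProd (wvec U (-1) j) with hP
  have h0 : ∀ j k, j ≠ k → P j * P k = 0 := by
    intro j k hjk
    rw [hP]
    simp only
    rw [outer_mul_outer, wvec_hinner U hU.1, if_neg hjk, zero_smul]
  rw [List.ofFn_eq_map, prod_refl_list P h0 _ (List.nodup_finRange N),
    ← List.ofFn_eq_map, List.sum_ofFn, usim_eq U hU.2]
end

section
/- Let ψ ∈ ℂ^N (N = 2^n) be a unit vector with at least two coordinates equal to zero, and let ε ∈ (0, 1]. Then for m = ⌈n/2 + 2 log₂(1/ε)⌉ + 5 there exists a unit vector φ ∈ ℂ^N all of whose coordinates have the form (a + bi)/2^m with a, b ∈ ℤ, such that ‖ψ − φ‖² ≤ 2·2^{n−2m} + 2√2·2^{n/2−m}, and consequently ‖R_ψ − R_φ‖_Fr ≤ ε. -/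
open Matrix Complex BigOperators Kronecker

open ComplexConjugate Finset

/-! ### Auxiliary lemmas -/

noncomputable def trunc (x : ℝ) : ℤ := if 0 ≤ x then ⌊x⌋ else ⌈x⌉

lemma trunc_sq_le (x : ℝ) : ((trunc x : ℝ))^2 ≤ x^2 := by
  unfold trunc
  split_ifs with h
  · have h1 : (⌊x⌋ : ℝ) ≤ x := Int.floor_le x
    have h2 : (0:ℝ) ≤ ⌊x⌋ := by exact_mod_cast Int.floor_nonneg.mpr h
    nlinarith
  · push_neg at h
    have h1 : x ≤ (⌈x⌉ : ℝ) := Int.le_ceil x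
    have h2 : ((⌈x⌉ : ℤ) : ℝ) ≤ 0 := by
      exact_mod_cast Int.ceil_le.mpr (by exact_mod_cast h.le : x ≤ ((0:ℤ):ℝ))
    nlinarith

lemma sub_trunc_sq_le (x : ℝ) : (x - (trunc x : ℝ))^2 ≤ 1 := by
  unfold trunc
  split_ifs with h
  · have h1 : (⌊x⌋ : ℝ) ≤ x := Int.floor_le x
    have h2 : x < ⌊x⌋ + 1 := Int.lt_floor_add_one x
    nlinarith
  · have h1 : x ≤ (⌈x⌉ : ℝ) := Int.le_ceil x
    have h2 : (⌈x⌉ : ℝ) < x + 1 := Int.ceil_lt_add_one x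
    nlinarith

lemma key_sq_diff (x t c : ℝ) (hc : 0 < c) (h1 : t^2 ≤ x^2) (h2 : (x - t)^2 ≤ 1/c^2) :
    x^2 - t^2 ≤ 2*|x|/c := by
  have habs : |t| ≤ |x| := by
    rw [← Real.sqrt_sq_eq_abs, ← Real.sqrt_sq_eq_abs]
    exact Real.sqrt_le_sqrt h1
  have habs2 : |x - t| ≤ 1/c := by
    rw [← Real.sqrt_sq_eq_abs]
    calc Real.sqrt ((x-t)^2) ≤ Real.sqrt (1/c^2) := Real.sqrt_le_sqrt h2
      _ = 1/c := by rw [one_div, one_div, Real.sqrt_inv, Real.sqrt_sq hc.le]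
  have hxt : |x + t| ≤ 2 * |x| := by
    calc |x + t| ≤ |x| + |t| := abs_add_le x t
      _ ≤ 2 * |x| := by linarith
  have hmul : |x - t| * |x + t| ≤ (1/c) * (2*|x|) :=
    mul_le_mul habs2 hxt (abs_nonneg _) (by positivity)
  have hle : x^2 - t^2 ≤ |x - t| * |x + t| := by
    rw [← abs_mul]
    calc x^2 - t^2 = (x - t)*(x + t) := by ring
      _ ≤ |(x - t)*(x + t)| := le_abs_self _
  calc x^2 - t^2 ≤ (1/c)*(2*|x|) := le_trans hle hmul
    _ = 2*|x|/c := by ring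

lemma sub_trunc_div_sq (x : ℝ) (m : ℕ) :
    (x - (trunc ((2:ℝ)^m * x) : ℝ)/(2:ℝ)^m)^2 ≤ 1/((2:ℝ)^m)^2 := by
  have hc : (0:ℝ) < (2:ℝ)^m := by positivity
  have h := sub_trunc_sq_le ((2:ℝ)^m * x)
  have he : (x - (trunc ((2:ℝ)^m * x) : ℝ)/(2:ℝ)^m)^2
      = ((2:ℝ)^m * x - (trunc ((2:ℝ)^m * x) : ℝ))^2 / ((2:ℝ)^m)^2 := by
    field_simp
  rw [he]
  gcongr

lemma normc_sq (z : ℂ) : ‖z‖^2 = z.re^2 + z.im^2 := by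
  rw [Complex.sq_norm, Complex.normSq_apply]; ring

lemma abs_re_add_im (z : ℂ) : |z.re| + |z.im| ≤ Real.sqrt 2 * ‖z‖ := by
  have hsq : (|z.re| + |z.im|)^2 ≤ (Real.sqrt 2 * ‖z‖)^2 := by
    rw [mul_pow, Real.sq_sqrt (by norm_num : (0:ℝ) ≤ 2), normc_sq]
    nlinarith [sq_nonneg (|z.re| - |z.im|), _root_.sq_abs z.re, _root_.sq_abs z.im]
  have := Real.sqrt_le_sqrt hsq
  rwa [Real.sqrt_sq (by positivity), Real.sqrt_sq (by positivity)] at this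

lemma trace_mul_conjTranspose_re {d : Type*} [Fintype d] (A : Matrix d d ℂ) :
    (Matrix.trace (A * Aᴴ)).re = ∑ i, ∑ k, Complex.normSq (A i k) := by
  simp [Matrix.trace, Matrix.diag, Matrix.mul_apply, Matrix.conjTranspose_apply,
    Complex.mul_conj, Complex.re_sum]

lemma entry_re_im (x y : ℤ) (m : ℕ) :
    ((((x:ℂ) + (y:ℂ)*Complex.I)/(((2:ℝ)^m : ℝ):ℂ)).re = (x:ℝ)/2^m) ∧
    ((((x:ℂ) + (y:ℂ)*Complex.I)/(((2:ℝ)^m : ℝ):ℂ)).im = (y:ℝ)/2^m) := by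
  constructor
  · rw [Complex.div_ofReal_re]; simp
  · rw [Complex.div_ofReal_im]; simp

lemma norm_int_div_sq (x y : ℤ) (m : ℕ) :
    ‖(((x:ℂ) + (y:ℂ)*Complex.I)/(((2:ℝ)^m : ℝ):ℂ))‖^2 = ((x:ℝ)^2 + (y:ℝ)^2)/4^m := by
  rw [normc_sq, (entry_re_im x y m).1, (entry_re_im x y m).2]
  rw [div_pow, div_pow, ← add_div]
  congr 1
  rw [← pow_mul, mul_comm m 2, pow_mul]; norm_num

lemma double_sum_helper {ι : Type*} [Fintype ι] (f g : ι → ℝ) (h : ι → ι → ℝ) :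
    ∑ i, ∑ k, (4*(f i * f k + g i * g k - 2 * h i k))
    = 4*((∑ i, f i)*(∑ i, f i) + (∑ i, g i)*(∑ i, g i) - 2*(∑ i, ∑ k, h i k)) := by
  have inner : ∀ i, ∑ k, (4*(f i * f k + g i * g k - 2 * h i k))
      = 4*(f i * (∑ k, f k) + g i * (∑ k, g k) - 2*(∑ k, h i k)) := by
    intro i
    rw [← Finset.mul_sum, Finset.sum_sub_distrib, Finset.sum_add_distrib, ← Finset.mul_sum,
      ← Finset.mul_sum, ← Finset.mul_sum]
  rw [Finset.sum_congr rfl (fun i _ => inner i)]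
  rw [← Finset.mul_sum, Finset.sum_sub_distrib, Finset.sum_add_distrib, ← Finset.sum_mul,
    ← Finset.sum_mul, ← Finset.mul_sum]

set_option maxHeartbeats 2000000 in
/-- a unit vector in ℂ^(2^n) with at least two zero coordinates can be
approximated by a unit vector with coordinates in (ℤ+iℤ)/2^m, with the stated bounds. -/
theorem approx_unit_vector_with_zeros (n : ℕ) (ψ : Fin (2 ^ n) → ℂ) (hψ : IsUnitVec ψ)
    (j l : Fin (2 ^ n)) (hjl : j ≠ l) (hj : ψ j = 0) (hl : ψ l = 0)
    (ε : ℝ) (hε0 : 0 < ε) (hε1 : ε ≤ 1) :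
    ∀ m : ℕ, m = ⌈(n : ℝ) / 2 + 2 * Real.logb 2 (1 / ε)⌉₊ + 5 →
      ∃ φ : Fin (2 ^ n) → ℂ,
        (∀ k, ∃ a b : ℤ, φ k = ((a : ℂ) + (b : ℂ) * Complex.I) / (2 : ℝ) ^ m) ∧
        IsUnitVec φ ∧
        evnorm (ψ - φ) ^ 2 ≤
          2 * (2 : ℝ) ^ ((n : ℝ) - 2 * m) + 2 * Real.sqrt 2 * (2 : ℝ) ^ ((n : ℝ) / 2 - m) ∧
        frobNorm (reflOp ψ - reflOp φ) ≤ ε := by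
  intro m hm
  have hψ' : ∑ i, ‖ψ i‖ ^ 2 = 1 := hψ
  have hc : (0:ℝ) < (2:ℝ)^m := by positivity
  have h4 : (0:ℝ) < (4:ℝ)^m := by positivity
  have hc2 : ((2:ℝ)^m)^2 = (4:ℝ)^m := by rw [← pow_mul, mul_comm m 2, pow_mul]; norm_num
  set av : Fin (2^n) → ℤ := fun k => trunc ((2:ℝ)^m * (ψ k).re) with hav
  set bv : Fin (2^n) → ℤ := fun k => trunc ((2:ℝ)^m * (ψ k).im) with hbv
  set s : Finset (Fin (2^n)) := Finset.univ \ {j, l} with hs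
  have hmem : ∀ k, k ∈ s ↔ (k ≠ j ∧ k ≠ l) := by
    intro k; simp [hs, not_or]
  have hsplit : ∀ f : Fin (2^n) → ℝ, ∑ k, f k = f j + f l + ∑ k ∈ s, f k := by
    intro f
    have h1 : ({j, l} : Finset (Fin (2^n))) ⊆ Finset.univ := Finset.subset_univ _
    rw [← Finset.sum_sdiff h1, Finset.sum_pair hjl, hs]
    ring
  -- sum over s of ψ's norms is 1
  have hψs : ∑ k ∈ s, ‖ψ k‖^2 = 1 := by
    have h := hsplit (fun k => ‖ψ k‖^2)
    rw [hψ'] at h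
    simp only [hj, hl, norm_zero, ne_eq, OfNat.ofNat_ne_zero, not_false_eq_true,
      zero_pow, zero_add] at h
    linarith only [h]
  -- per-coordinate trunc bounds
  have hA : ∀ k, ((av k : ℝ)^2 + (bv k : ℝ)^2) ≤ (4:ℝ)^m * ‖ψ k‖^2 := by
    intro k
    have h1 := trunc_sq_le ((2:ℝ)^m * (ψ k).re)
    have h2 := trunc_sq_le ((2:ℝ)^m * (ψ k).im)
    simp only [hav, hbv]
    rw [normc_sq, ← hc2]
    nlinarith only [h1, h2]
  set K : ℕ := ∑ k ∈ s, ((av k)^2 + (bv k)^2).toNat with hKdef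
  have hK : (K:ℝ) = ∑ k ∈ s, ((av k:ℝ)^2 + (bv k:ℝ)^2) := by
    rw [hKdef, Nat.cast_sum]
    apply Finset.sum_congr rfl
    intro k _
    have h0 : (0:ℤ) ≤ (av k)^2 + (bv k)^2 := by positivity
    have : ((((av k)^2 + (bv k)^2).toNat : ℤ) : ℝ) = ((av k:ℝ)^2 + (bv k:ℝ)^2) := by
      rw [Int.toNat_of_nonneg h0]; push_cast; ring
    exact_mod_cast this
  have hKle : (K:ℝ) ≤ (4:ℝ)^m := by
    rw [hK]
    calc ∑ k ∈ s, ((av k:ℝ)^2 + (bv k:ℝ)^2)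
        ≤ ∑ k ∈ s, (4:ℝ)^m * ‖ψ k‖^2 := Finset.sum_le_sum (fun k _ => hA k)
      _ = (4:ℝ)^m * ∑ k ∈ s, ‖ψ k‖^2 := by rw [Finset.mul_sum]
      _ = (4:ℝ)^m := by rw [hψs, mul_one]
  have hKle' : K ≤ 4^m := by
    have : (K:ℝ) ≤ ((4^m : ℕ):ℝ) := by push_cast; exact hKle
    exact_mod_cast this
  obtain ⟨p, q, r, t, hpqrt⟩ := Nat.sum_four_squares (4^m - K)
  have hfour : (p:ℝ)^2 + (q:ℝ)^2 + (r:ℝ)^2 + (t:ℝ)^2 = (4:ℝ)^m - (K:ℝ) := by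
    have h := congrArg (Nat.cast : ℕ → ℝ) hpqrt
    rw [Nat.cast_sub hKle'] at h
    push_cast at h
    linarith
  -- the approximating vector
  set φv : Fin (2^n) → ℂ := fun k =>
    if k = j then ((((p:ℤ)):ℂ) + (((q:ℤ)):ℂ)*Complex.I)/(((2:ℝ)^m : ℝ):ℂ)
    else if k = l then ((((r:ℤ)):ℂ) + (((t:ℤ)):ℂ)*Complex.I)/(((2:ℝ)^m : ℝ):ℂ)
    else (((av k):ℂ) + ((bv k):ℂ)*Complex.I)/(((2:ℝ)^m : ℝ):ℂ) with hφv
  have hφj : φv j = ((((p:ℤ)):ℂ) + (((q:ℤ)):ℂ)*Complex.I)/(((2:ℝ)^m : ℝ):ℂ) := by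
    simp [hφv]
  have hφl : φv l = ((((r:ℤ)):ℂ) + (((t:ℤ)):ℂ)*Complex.I)/(((2:ℝ)^m : ℝ):ℂ) := by
    simp [hφv, Ne.symm hjl]
  have hφs : ∀ k ∈ s, φv k = (((av k):ℂ) + ((bv k):ℂ)*Complex.I)/(((2:ℝ)^m : ℝ):ℂ) := by
    intro k hk
    obtain ⟨h1, h2⟩ := (hmem k).mp hk
    simp [hφv, h1, h2]
  -- norms of φv entries
  have hnj : ‖φv j‖^2 = ((p:ℝ)^2 + (q:ℝ)^2)/(4:ℝ)^m := by
    rw [hφj, norm_int_div_sq]; push_cast; ring_nf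
  have hnl : ‖φv l‖^2 = ((r:ℝ)^2 + (t:ℝ)^2)/(4:ℝ)^m := by
    rw [hφl, norm_int_div_sq]; push_cast; ring_nf
  have hns : ∀ k ∈ s, ‖φv k‖^2 = ((av k:ℝ)^2 + (bv k:ℝ)^2)/(4:ℝ)^m := by
    intro k hk
    rw [hφs k hk, norm_int_div_sq]
  -- unit vector
  have hunit : IsUnitVec φv := by
    show ∑ i, ‖φv i‖ ^ 2 = 1
    rw [hsplit (fun k => ‖φv k‖^2)]
    rw [hnj, hnl, Finset.sum_congr rfl hns, ← Finset.sum_div, ← hK]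
    field_simp
    linarith only [hfour]
  -- distance bound pieces
  have hev : evnorm (ψ - φv)^2 = ∑ k, ‖ψ k - φv k‖^2 := by
    rw [evnorm, Real.sq_sqrt (Finset.sum_nonneg (fun i _ => sq_nonneg _))]
    rfl
  have htail : ∀ k ∈ s, ‖ψ k - φv k‖^2 ≤ 2/(4:ℝ)^m := by
    intro k hk
    rw [normc_sq, Complex.sub_re, Complex.sub_im, hφs k hk,
      (entry_re_im (av k) (bv k) m).1, (entry_re_im (av k) (bv k) m).2]
    have h1 : ((ψ k).re - (av k:ℝ)/(2:ℝ)^m)^2 ≤ 1/((2:ℝ)^m)^2 := by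
      simp only [hav]; exact sub_trunc_div_sq ((ψ k).re) m
    have h2 : ((ψ k).im - (bv k:ℝ)/(2:ℝ)^m)^2 ≤ 1/((2:ℝ)^m)^2 := by
      simp only [hbv]; exact sub_trunc_div_sq ((ψ k).im) m
    rw [← hc2]
    have : (2:ℝ)/((2:ℝ)^m)^2 = 1/((2:ℝ)^m)^2 + 1/((2:ℝ)^m)^2 := by ring
    rw [this]
    exact add_le_add h1 h2
  have hcard : ((s.card : ℕ) : ℝ) ≤ (2:ℝ)^n := by
    have h1 : s.card ≤ (Finset.univ : Finset (Fin (2^n))).card := Finset.card_le_univ s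
    have h2 : (Finset.univ : Finset (Fin (2^n))).card = 2^n := by
      rw [Finset.card_univ, Fintype.card_fin]
    rw [h2] at h1
    exact_mod_cast h1
  have htailsum : ∑ k ∈ s, ‖ψ k - φv k‖^2 ≤ (2:ℝ)^n * (2/(4:ℝ)^m) := by
    calc ∑ k ∈ s, ‖ψ k - φv k‖^2 ≤ ∑ _k ∈ s, 2/(4:ℝ)^m := Finset.sum_le_sum htail
      _ = (s.card : ℝ) * (2/(4:ℝ)^m) := by rw [Finset.sum_const, nsmul_eq_mul]
      _ ≤ (2:ℝ)^n * (2/(4:ℝ)^m) := by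
          apply mul_le_mul_of_nonneg_right hcard (by positivity)
  -- head bound
  have hCS : ∑ k ∈ s, ‖ψ k‖ ≤ Real.sqrt ((2:ℝ)^n) := by
    have hsq : (∑ k ∈ s, ‖ψ k‖)^2 ≤ (2:ℝ)^n := by
      calc (∑ k ∈ s, ‖ψ k‖)^2 ≤ (s.card : ℝ) * ∑ k ∈ s, ‖ψ k‖^2 :=
            sq_sum_le_card_mul_sum_sq
        _ = (s.card : ℝ) := by rw [hψs, mul_one]
        _ ≤ (2:ℝ)^n := hcard
    calc ∑ k ∈ s, ‖ψ k‖ = Real.sqrt ((∑ k ∈ s, ‖ψ k‖)^2) :=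
          (Real.sqrt_sq (Finset.sum_nonneg (fun i _ => norm_nonneg _))).symm
      _ ≤ Real.sqrt ((2:ℝ)^n) := Real.sqrt_le_sqrt hsq
  have hheadterm : ∀ k ∈ s, ‖ψ k‖^2 - ((av k:ℝ)^2 + (bv k:ℝ)^2)/(4:ℝ)^m
      ≤ (2*Real.sqrt 2/(2:ℝ)^m) * ‖ψ k‖ := by
    intro k hk
    have ht1 : ((av k:ℝ)/(2:ℝ)^m)^2 ≤ ((ψ k).re)^2 := by
      rw [div_pow, div_le_iff₀ (by positivity)]
      have h := trunc_sq_le ((2:ℝ)^m * (ψ k).re)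
      simp only [hav]
      nlinarith only [h]
    have ht2 : ((bv k:ℝ)/(2:ℝ)^m)^2 ≤ ((ψ k).im)^2 := by
      rw [div_pow, div_le_iff₀ (by positivity)]
      have h := trunc_sq_le ((2:ℝ)^m * (ψ k).im)
      simp only [hbv]
      nlinarith only [h]
    have hd1 : (((ψ k).re) - (av k:ℝ)/(2:ℝ)^m)^2 ≤ 1/((2:ℝ)^m)^2 := by
      simp only [hav]; exact sub_trunc_div_sq ((ψ k).re) m
    have hd2 : (((ψ k).im) - (bv k:ℝ)/(2:ℝ)^m)^2 ≤ 1/((2:ℝ)^m)^2 := by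
      simp only [hbv]; exact sub_trunc_div_sq ((ψ k).im) m
    have hre := key_sq_diff ((ψ k).re) ((av k:ℝ)/(2:ℝ)^m) ((2:ℝ)^m) hc ht1 hd1
    have him := key_sq_diff ((ψ k).im) ((bv k:ℝ)/(2:ℝ)^m) ((2:ℝ)^m) hc ht2 hd2
    have hsplit2 : ((av k:ℝ)^2 + (bv k:ℝ)^2)/(4:ℝ)^m
        = ((av k:ℝ)/(2:ℝ)^m)^2 + ((bv k:ℝ)/(2:ℝ)^m)^2 := by
      rw [div_pow, div_pow, hc2, ← add_div]
    have habsle : |(ψ k).re| + |(ψ k).im| ≤ Real.sqrt 2 * ‖ψ k‖ := abs_re_add_im (ψ k)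
    rw [normc_sq, hsplit2]
    have h2c : (0:ℝ) ≤ 2/(2:ℝ)^m := by positivity
    have hmul := mul_le_mul_of_nonneg_left habsle h2c
    have heq1 : 2*|(ψ k).re|/(2:ℝ)^m + 2*|(ψ k).im|/(2:ℝ)^m
        = 2/(2:ℝ)^m * (|(ψ k).re|+|(ψ k).im|) := by ring
    have heq2 : 2/(2:ℝ)^m * (Real.sqrt 2 * ‖ψ k‖) = 2*Real.sqrt 2/(2:ℝ)^m * ‖ψ k‖ := by
      ring
    linarith only [hre, him, hmul, heq1, heq2]
  have hheadsum : ((p:ℝ)^2 + (q:ℝ)^2)/(4:ℝ)^m + ((r:ℝ)^2 + (t:ℝ)^2)/(4:ℝ)^m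
      ≤ 2*Real.sqrt 2 * (Real.sqrt ((2:ℝ)^n)/(2:ℝ)^m) := by
    have h1 : ((p:ℝ)^2 + (q:ℝ)^2)/(4:ℝ)^m + ((r:ℝ)^2 + (t:ℝ)^2)/(4:ℝ)^m
        = 1 - (K:ℝ)/(4:ℝ)^m := by
      field_simp
      linarith only [hfour]
    have h2 : 1 - (K:ℝ)/(4:ℝ)^m
        = ∑ k ∈ s, (‖ψ k‖^2 - ((av k:ℝ)^2 + (bv k:ℝ)^2)/(4:ℝ)^m) := by
      rw [Finset.sum_sub_distrib, hψs, ← Finset.sum_div, ← hK]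
    have h3 : ∑ k ∈ s, (‖ψ k‖^2 - ((av k:ℝ)^2 + (bv k:ℝ)^2)/(4:ℝ)^m)
        ≤ ∑ k ∈ s, (2*Real.sqrt 2/(2:ℝ)^m) * ‖ψ k‖ := Finset.sum_le_sum hheadterm
    have h4' : ∑ k ∈ s, (2*Real.sqrt 2/(2:ℝ)^m) * ‖ψ k‖
        = (2*Real.sqrt 2/(2:ℝ)^m) * ∑ k ∈ s, ‖ψ k‖ := by rw [Finset.mul_sum]
    have h5 : (2*Real.sqrt 2/(2:ℝ)^m) * ∑ k ∈ s, ‖ψ k‖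
        ≤ (2*Real.sqrt 2/(2:ℝ)^m) * Real.sqrt ((2:ℝ)^n) :=
      mul_le_mul_of_nonneg_left hCS (by positivity)
    rw [h1, h2]
    calc _ ≤ _ := h3
      _ = _ := h4'
      _ ≤ _ := h5
      _ = 2*Real.sqrt 2 * (Real.sqrt ((2:ℝ)^n)/(2:ℝ)^m) := by ring
  -- rpow rewritings
  have hR1 : (2:ℝ) ^ ((n : ℝ) - 2 * m) = (2:ℝ)^n / (4:ℝ)^m := by
    rw [Real.rpow_sub two_pos]
    congr 1
    · exact Real.rpow_natCast 2 n
    · rw [show (2*(m:ℝ)) = ((2*m : ℕ):ℝ) by push_cast; ring, Real.rpow_natCast,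
        pow_mul]
      norm_num
  have hR2 : (2:ℝ) ^ ((n : ℝ)/2 - m) = Real.sqrt ((2:ℝ)^n) / (2:ℝ)^m := by
    rw [Real.rpow_sub two_pos]
    congr 1
    · rw [show (n:ℝ)/2 = (n:ℝ)*(1/2) by ring,
        Real.rpow_mul (by norm_num : (0:ℝ) ≤ 2), Real.rpow_natCast,
        ← Real.sqrt_eq_rpow]
    · exact Real.rpow_natCast 2 m
  -- full distance bound
  have hdist : evnorm (ψ - φv)^2 ≤
      2 * (2:ℝ) ^ ((n : ℝ) - 2 * m) + 2 * Real.sqrt 2 * (2:ℝ) ^ ((n : ℝ)/2 - m) := by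
    rw [hev, hsplit (fun k => ‖ψ k - φv k‖^2)]
    have hzj : ‖ψ j - φv j‖^2 = ‖φv j‖^2 := by rw [hj, zero_sub, norm_neg]
    have hzl : ‖ψ l - φv l‖^2 = ‖φv l‖^2 := by rw [hl, zero_sub, norm_neg]
    rw [hzj, hzl, hnj, hnl, hR1, hR2]
    have heq : (2:ℝ)^n*(2/(4:ℝ)^m) = 2*((2:ℝ)^n/(4:ℝ)^m) := by ring
    linarith only [htailsum, hheadsum, heq]
  -- coordinate form
  have hcoord : ∀ k, ∃ a b : ℤ, φv k = ((a : ℂ) + (b : ℂ) * Complex.I) / (2 : ℝ) ^ m := by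
    intro k
    by_cases h1 : k = j
    · exact ⟨(p:ℤ), (q:ℤ), by rw [h1, hφj]; push_cast; ring⟩
    · by_cases h2 : k = l
      · exact ⟨(r:ℤ), (t:ℤ), by rw [h2, hφl]; push_cast; ring⟩
      · exact ⟨av k, bv k, by rw [hφs k ((hmem k).mpr ⟨h1, h2⟩)]; push_cast; ring⟩
  -- Frobenius bound
  set w : ℂ := ∑ i, φv i * (starRingEnd ℂ) (ψ i) with hw
  have hz : ∀ z : ℂ, ‖z‖^2 = Complex.normSq z := fun z => by
    rw [Complex.sq_norm]
  have hφ1 : ∑ i, ‖φv i‖^2 = 1 := hunit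
  have hφunitSq : ∑ i, Complex.normSq (φv i) = 1 := by
    rw [← hφ1]; exact Finset.sum_congr rfl fun i _ => (hz (φv i)).symm
  have hψunitSq : ∑ i, Complex.normSq (ψ i) = 1 := by
    rw [← hψ']; exact Finset.sum_congr rfl fun i _ => (hz (ψ i)).symm
  have habsw : ‖w‖ ≤ 1 := by
    have h1 : ‖w‖ ≤ ∑ i, ‖φv i * (starRingEnd ℂ) (ψ i)‖ := by
      rw [hw]; exact norm_sum_le _ _
    have h2 : ∀ i, ‖φv i * (starRingEnd ℂ) (ψ i)‖ = ‖φv i‖ * ‖ψ i‖ := by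
      intro i
      rw [norm_mul, Complex.norm_conj]
    have h3 : (∑ i, ‖φv i‖ * ‖ψ i‖)^2 ≤ 1 := by
      calc (∑ i, ‖φv i‖ * ‖ψ i‖)^2 ≤ (∑ i, ‖φv i‖^2) * ∑ i, ‖ψ i‖^2 :=
            Finset.sum_mul_sq_le_sq_mul_sq _ _ _
        _ = 1 := by rw [hφ1, hψ']; norm_num
    have h4 : (0:ℝ) ≤ ∑ i, ‖φv i‖ * ‖ψ i‖ :=
      Finset.sum_nonneg fun i _ => by positivity
    have h5 : ∑ i, ‖φv i‖ * ‖ψ i‖ ≤ 1 :=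
      (pow_le_one_iff_of_nonneg h4 two_ne_zero).mp h3
    calc ‖w‖ ≤ ∑ i, ‖φv i * (starRingEnd ℂ) (ψ i)‖ := h1
      _ = ∑ i, ‖φv i‖ * ‖ψ i‖ := Finset.sum_congr rfl fun i _ => h2 i
      _ ≤ 1 := h5
  have hconjsum : ∑ k, ψ k * (starRingEnd ℂ) (φv k) = (starRingEnd ℂ) w := by
    rw [hw, map_sum]
    exact Finset.sum_congr rfl fun k _ => by rw [_root_.map_mul, Complex.conj_conj]; ring
  have hδ : evnorm (ψ - φv)^2 = 2 - 2*w.re := by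
    rw [hev]
    have h1 : ∀ k, ‖ψ k - φv k‖^2
        = Complex.normSq (ψ k) + Complex.normSq (φv k)
          - 2*(ψ k * (starRingEnd ℂ) (φv k)).re :=
      fun k => by rw [hz, Complex.normSq_sub]
    rw [Finset.sum_congr rfl fun k _ => h1 k, Finset.sum_sub_distrib,
      Finset.sum_add_distrib, hψunitSq, hφunitSq, ← Finset.mul_sum, ← Complex.re_sum,
      hconjsum, Complex.conj_re]
    ring
  -- entries of the difference of reflections
  have hent : ∀ i k, (reflOp ψ - reflOp φv) i k
      = 2*(φv i * (starRingEnd ℂ) (φv k) - ψ i * (starRingEnd ℂ) (ψ k)) := by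
    intro i k
    simp only [reflOp, outerProd, Matrix.sub_apply, Matrix.smul_apply,
      Matrix.vecMulVec_apply, Matrix.one_apply, Pi.star_apply, Complex.star_def,
      smul_eq_mul]
    ring
  have h2norm : Complex.normSq (2:ℂ) = 4 := by
    norm_num [Complex.normSq_apply]
  have key : ∀ i k, Complex.normSq ((reflOp ψ - reflOp φv) i k)
      = 4*(Complex.normSq (φv i) * Complex.normSq (φv k)
           + Complex.normSq (ψ i) * Complex.normSq (ψ k)
           - 2*((φv i * (starRingEnd ℂ) (ψ i)) * ((starRingEnd ℂ) (φv k) * ψ k)).re) := by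
    intro i k
    rw [hent i k, Complex.normSq_mul, h2norm, Complex.normSq_sub,
      Complex.normSq_mul, Complex.normSq_mul, Complex.normSq_conj, Complex.normSq_conj]
    have hcc : (φv i * (starRingEnd ℂ) (φv k)) * (starRingEnd ℂ) (ψ i * (starRingEnd ℂ) (ψ k))
        = (φv i * (starRingEnd ℂ) (ψ i)) * ((starRingEnd ℂ) (φv k) * ψ k) := by
      rw [_root_.map_mul, Complex.conj_conj]; ring
    rw [hcc]
  have hww : ∑ i, ∑ k, ((φv i * (starRingEnd ℂ) (ψ i)) * ((starRingEnd ℂ) (φv k) * ψ k)).re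
      = Complex.normSq w := by
    have hconjw : ∑ k, (starRingEnd ℂ) (φv k) * ψ k = (starRingEnd ℂ) w := by
      rw [hw, map_sum]
      exact Finset.sum_congr rfl fun k _ => by rw [_root_.map_mul, Complex.conj_conj]
    have e3 : ((∑ i, φv i * (starRingEnd ℂ) (ψ i)) * (∑ k, (starRingEnd ℂ) (φv k) * ψ k)).re
        = ∑ i, ∑ k, ((φv i * (starRingEnd ℂ) (ψ i)) * ((starRingEnd ℂ) (φv k) * ψ k)).re := by
      rw [Finset.sum_mul_sum, Complex.re_sum]
      exact Finset.sum_congr rfl fun i _ => Complex.re_sum _ _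
    rw [← e3, ← hw, hconjw, Complex.mul_conj, Complex.ofReal_re]
  have htrace : (Matrix.trace ((reflOp ψ - reflOp φv) * (reflOp ψ - reflOp φv)ᴴ)).re
      = 8*(1 - Complex.normSq w) := by
    rw [trace_mul_conjTranspose_re,
      Finset.sum_congr rfl fun i _ => Finset.sum_congr rfl fun k _ => key i k,
      double_sum_helper (fun i => Complex.normSq (φv i)) (fun i => Complex.normSq (ψ i))
        (fun i k => ((φv i * (starRingEnd ℂ) (ψ i)) * ((starRingEnd ℂ) (φv k) * ψ k)).re),
      hφunitSq, hψunitSq, hww]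
    ring
  -- numerics
  have hL : (2:ℝ)^(Real.logb 2 (1/ε)) = 1/ε :=
    Real.rpow_logb two_pos (by norm_num) (by positivity)
  have hmge : (n:ℝ)/2 + 2*Real.logb 2 (1/ε) + 5 ≤ (m:ℝ) := by
    have h1 : ((n:ℝ)/2 + 2*Real.logb 2 (1/ε))
        ≤ (⌈(n:ℝ)/2 + 2*Real.logb 2 (1/ε)⌉₊ : ℝ) := Nat.le_ceil _
    rw [hm]; push_cast; linarith only [h1]
  have hY : (2:ℝ)^((n:ℝ)/2 - m) ≤ ε^2/32 := by
    have h1 : (n:ℝ)/2 - m ≤ -(2*Real.logb 2 (1/ε)) - 5 := by linarith only [hmge]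
    have h2 : (2:ℝ)^((n:ℝ)/2 - m) ≤ (2:ℝ)^(-(2*Real.logb 2 (1/ε)) - 5) :=
      Real.rpow_le_rpow_of_exponent_le one_le_two h1
    have h3 : (2:ℝ)^(-(2*Real.logb 2 (1/ε)) - 5) = ε^2/32 := by
      rw [Real.rpow_sub two_pos]
      have e1 : (2:ℝ)^(-(2*Real.logb 2 (1/ε))) = ε^2 := by
        rw [show -(2*Real.logb 2 (1/ε)) = (Real.logb 2 (1/ε))*(-2) by ring,
          Real.rpow_mul (by norm_num : (0:ℝ) ≤ 2), hL,
          show ((-2:ℝ)) = ((-2:ℤ):ℝ) by norm_num, Real.rpow_intCast]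
        rw [one_div, _root_.zpow_neg, _root_.inv_zpow, inv_inv, _root_.zpow_two]
        ring
      have e2 : (2:ℝ)^((5:ℝ)) = 32 := by
        rw [show ((5:ℝ)) = ((5:ℕ):ℝ) by norm_num, Real.rpow_natCast]; norm_num
      rw [e1, e2]
    linarith only [h2, h3]
  have hX : (2:ℝ)^((n:ℝ) - 2*m) ≤ (ε^2/32)^2 := by
    have heq : (n:ℝ) - 2*m = ((n:ℝ)/2 - m)*2 := by ring
    rw [heq, Real.rpow_mul (by norm_num : (0:ℝ) ≤ 2),
      show ((2:ℝ)) = ((2:ℕ):ℝ) by norm_num, Real.rpow_natCast]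
    exact pow_le_pow_left₀ (Real.rpow_nonneg (by norm_num) _) hY 2
  have hY0 : (0:ℝ) ≤ (2:ℝ)^((n:ℝ)/2 - m) := Real.rpow_nonneg (by norm_num) _
  have hX0 : (0:ℝ) ≤ (2:ℝ)^((n:ℝ) - 2*m) := Real.rpow_nonneg (by norm_num) _
  have hS2 : (Real.sqrt 2)^2 = 2 := Real.sq_sqrt (by norm_num)
  have hS0 : (0:ℝ) ≤ Real.sqrt 2 := Real.sqrt_nonneg 2
  have hSle : Real.sqrt 2 ≤ 17/12 := by
    nlinarith only [hS2, sq_nonneg (Real.sqrt 2 - 3/2)]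
  have hfrle : 8*(1 - Complex.normSq w) ≤ ε^2 := by
    have h1 : Complex.normSq w = ‖w‖^2 := (Complex.sq_norm w).symm
    have h2 : w.re ≤ ‖w‖ := Complex.re_le_norm w
    have h3 : 1 - Complex.normSq w ≤ 2*(1 - w.re) := by
      rw [h1]
      nlinarith only [habsw, h2, norm_nonneg w]
    have h4 : 2*(1 - w.re) = evnorm (ψ - φv)^2 := by rw [hδ]; ring
    have hSY : Real.sqrt 2 * (2:ℝ)^((n:ℝ)/2 - m) ≤ (17/12)*(ε^2/32) :=
      mul_le_mul hSle hY hY0 (by norm_num)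
    have hXb : (2:ℝ)^((n:ℝ) - 2*m) ≤ ε^2/1024 := by
      calc (2:ℝ)^((n:ℝ) - 2*m) ≤ (ε^2/32)^2 := hX
        _ ≤ ε^2/1024 := by
            have hε2 : ε^2 ≤ 1 := by nlinarith only [hε0, hε1]
            nlinarith only [hε2, sq_nonneg ε]
    linarith only [h3, h4, hdist, hSY, hXb, sq_nonneg ε]
  have hfrob : frobNorm (reflOp ψ - reflOp φv) ≤ ε := by
    unfold frobNorm
    rw [htrace]
    calc Real.sqrt (8*(1 - Complex.normSq w)) ≤ Real.sqrt (ε^2) :=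
          Real.sqrt_le_sqrt hfrle
      _ = ε := Real.sqrt_sq hε0.le
  exact ⟨φv, hcoord, hunit, hdist, hfrob⟩
end
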